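/- Let ω(x) = c_S |x|⁻⁴ (1 + a (r/|x|)^ξ)⁻² for |x| ≥ r, where c_S = 3⁴ 2⁻³ π², ξ = (−7 + √73)/2, r > 0, and a > −1. Then ω satisfies the differential inequality Δω(x) ≥ 4π c_TF^{−3/2} ω(x)^{3/2} for all |x| > r, where c_TF = 2⁻¹ (3π²)^{2/3}. -/

import Mathlib

open Real Finset

noncomputable abbrev E3 := EuclideanSpace ℝ (Fin 3)

noncomputable def e3 (i : Fin 3) : E3 := EuclideanSpace.basisFun (Fin 3) ℝ i

/-- The Laplacian of `f : ℝ³ → ℝ`. -/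
noncomputable def laplacianE3 (f : E3 → ℝ) (x : E3) : ℝ :=
  ∑ i, iteratedFDeriv ℝ 2 f x ![e3 i, e3 i]

/-- The Sommerfeld constant `c_S = 3⁴ 2⁻³ π²`. -/
noncomputable def cS : ℝ := 3 ^ 4 * 2⁻¹ ^ 3 * π ^ 2

/-- The Thomas–Fermi constant `c_TF = 2⁻¹ (3π²)^{2/3}`. -/
noncomputable def cTF : ℝ := 2⁻¹ * (3 * π ^ 2) ^ ((2 : ℝ) / 3)

/-- The exponent `ξ = (−7 + √73)/2`. -/
noncomputable def ξ : ℝ := (-7 + Real.sqrt 73) / 2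

section AUX
noncomputable def Fs (b γ : ℝ) : ℝ → ℝ := fun t => cS * (t ^ 2 * (1 + b * t ^ γ) ^ 2)⁻¹

noncomputable def Fs1 (b γ : ℝ) : ℝ → ℝ := fun t =>
  cS * (t ^ 3)⁻¹ * ((1 + b * t ^ γ) ^ 3)⁻¹ *
    (-2 * (1 + b * t ^ γ) - 2 * γ * (b * t ^ γ))

noncomputable def Fs2 (b γ : ℝ) : ℝ → ℝ := fun t =>
  cS * (t ^ 4)⁻¹ * ((1 + b * t ^ γ) ^ 4)⁻¹ *
    (6 * (1 + b * t ^ γ) ^ 2 + (10 * γ - 2 * γ ^ 2) * (b * t ^ γ) * (1 + b * t ^ γ)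
      + 6 * γ ^ 2 * (b * t ^ γ) ^ 2)

lemma hasDerivAt_Fs (b γ t : ℝ) (ht : 0 < t) (hw : 1 + b * t ^ γ ≠ 0) :
    HasDerivAt (Fs b γ) (Fs1 b γ t) t := by
  have hT : HasDerivAt (fun s : ℝ => s ^ γ) (γ * t ^ (γ - 1)) t :=
    Real.hasDerivAt_rpow_const (Or.inl ht.ne')
  have hw' : HasDerivAt (fun s : ℝ => 1 + b * s ^ γ) (b * (γ * t ^ (γ - 1))) t :=
    (hT.const_mul b).const_add 1
  have hP := (hasDerivAt_pow 2 t).mul (hw'.pow 2)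
  have hPne : t ^ 2 * (1 + b * t ^ γ) ^ 2 ≠ 0 :=
    mul_ne_zero (pow_ne_zero _ ht.ne') (pow_ne_zero _ hw)
  have h := (hP.inv hPne).const_mul cS
  refine h.congr_deriv ?_
  unfold Fs1
  rw [Real.rpow_sub ht, Real.rpow_one]
  have h1 : t ≠ 0 := ht.ne'
  simp only [Pi.pow_apply, Pi.mul_apply, Pi.inv_apply, Pi.sub_apply]
  field_simp
  ring

lemma hasDerivAt_Fs1 (b γ t : ℝ) (ht : 0 < t) (hw : 1 + b * t ^ γ ≠ 0) :
    HasDerivAt (Fs1 b γ) (Fs2 b γ t) t := by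
  have hT : HasDerivAt (fun s : ℝ => s ^ γ) (γ * t ^ (γ - 1)) t :=
    Real.hasDerivAt_rpow_const (Or.inl ht.ne')
  have hu : HasDerivAt (fun s : ℝ => b * s ^ γ) (b * (γ * t ^ (γ - 1))) t := hT.const_mul b
  have hw' : HasDerivAt (fun s : ℝ => 1 + b * s ^ γ) (b * (γ * t ^ (γ - 1))) t := hu.const_add 1
  have h3 := (hasDerivAt_pow 3 t).inv (pow_ne_zero 3 ht.ne')
  have hw3 := (hw'.pow 3).inv (pow_ne_zero 3 hw)
  have hL := (hw'.const_mul (-2 : ℝ)).sub (hu.const_mul (2 * γ))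
  have h := ((h3.const_mul cS).mul hw3).mul hL
  refine h.congr_deriv ?_
  unfold Fs2
  rw [Real.rpow_sub ht, Real.rpow_one]
  have h1 : t ≠ 0 := ht.ne'
  simp only [Pi.pow_apply, Pi.mul_apply, Pi.inv_apply, Pi.sub_apply]
  field_simp
  ring


lemma xi_sq : ξ ^ 2 + 7 * ξ = 6 := by
  have hsq : Real.sqrt 73 ^ 2 = 73 := Real.sq_sqrt (by norm_num)
  unfold ξ
  linear_combination (1/4 : ℝ) * hsq

lemma xi_pos : 0 < ξ := by
  have h8 : (8 : ℝ) = Real.sqrt 64 := by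
    rw [show (64:ℝ) = 8 ^ 2 by norm_num, Real.sqrt_sq (by norm_num)]
  have : (8:ℝ) ≤ Real.sqrt 73 := by
    rw [h8]; exact Real.sqrt_le_sqrt (by norm_num)
  unfold ξ; linarith


lemma mul_inv_pow_succ (w : ℝ) (hw : w ≠ 0) (n : ℕ) : w * (w ^ (n+1))⁻¹ = (w ^ n)⁻¹ := by
  rw [pow_succ, mul_inv, mul_comm ((w ^ n)⁻¹) w⁻¹, ← mul_assoc, mul_inv_cancel₀ hw, one_mul]

lemma key_comb (b t : ℝ) (ht : 0 < t) (hw : (1 + b * t ^ (-(ξ/2))) ≠ 0) :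
    6 * Fs1 b (-(ξ/2)) t + 4 * t * Fs2 b (-(ξ/2)) t
      = 12 * cS * (t ^ 3)⁻¹ * ((1 + b * t ^ (-(ξ/2))) ^ 3)⁻¹
        + 6 * ξ ^ 2 * (b * t ^ (-(ξ/2))) ^ 2 * cS * (t ^ 3)⁻¹
            * ((1 + b * t ^ (-(ξ/2))) ^ 4)⁻¹ := by
  have hξ6 := xi_sq
  have h1 : t ≠ 0 := ht.ne'
  have r1 : t * (t ^ 4)⁻¹ = (t ^ 3)⁻¹ := mul_inv_pow_succ t h1 3
  have r2 : (1 + b * t ^ (-(ξ/2))) * ((1 + b * t ^ (-(ξ/2))) ^ 4)⁻¹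
      = ((1 + b * t ^ (-(ξ/2))) ^ 3)⁻¹ := mul_inv_pow_succ _ hw 3
  unfold Fs1 Fs2
  set u : ℝ := b * t ^ (-(ξ/2)) with hu
  set It3 : ℝ := (t ^ 3)⁻¹ with hIt3
  set It4 : ℝ := (t ^ 4)⁻¹ with hIt4
  set Iw3 : ℝ := ((1 + u) ^ 3)⁻¹ with hIw3
  set Iw4 : ℝ := ((1 + u) ^ 4)⁻¹ with hIw4
  linear_combination
    (4 * cS * Iw4 * (6 * (1 + u) ^ 2 + (10 * (-(ξ/2)) - 2 * (-(ξ/2)) ^ 2) * u * (1 + u)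
      + 6 * (-(ξ/2)) ^ 2 * u ^ 2)) * r1
    + (-(cS * It3 * (6 * (-2 * (1 + u) - 2 * (-(ξ/2)) * u) - 12))) * r2
    + (-2 * u * (1 + u) * cS * It3 * Iw4) * hξ6


lemma const_id : 4 * π * cTF ^ (-(3 : ℝ) / 2) * cS ^ ((3 : ℝ) / 2) = 12 * cS := by
  have hπ : (0:ℝ) < π := pi_pos
  have hX : (0:ℝ) < 3 * π ^ 2 := by positivity
  have hA : cTF ^ (-(3 : ℝ) / 2) = 2 ^ ((3:ℝ)/2) * (3 * π ^ 2)⁻¹ := by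
    unfold cTF
    rw [Real.mul_rpow (by norm_num) (Real.rpow_pos_of_pos hX _).le,
      ← Real.rpow_mul hX.le, Real.inv_rpow (by norm_num), ← Real.rpow_neg (by norm_num)]
    norm_num
    rw [Real.rpow_neg_one, mul_inv]
    ring
  have hB : cS ^ ((3 : ℝ) / 2) = 3 ^ 6 * π ^ 3 * (2 ^ ((9:ℝ)/2))⁻¹ := by
    unfold cS
    rw [Real.mul_rpow (by positivity) (by positivity),
        Real.mul_rpow (by positivity) (by positivity)]
    rw [show ((3:ℝ) ^ 4) = ((81:ℝ)) by norm_num, show ((2:ℝ)⁻¹ ^ 3) = ((8:ℝ))⁻¹ by norm_num]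
    rw [Real.inv_rpow (by norm_num)]
    rw [show ((81:ℝ)) = (3:ℝ) ^ (4:ℕ) by norm_num, show ((8:ℝ)) = (2:ℝ) ^ (3:ℕ) by norm_num,
      ← Real.rpow_natCast 3 4, ← Real.rpow_natCast 2 3, ← Real.rpow_natCast π 2,
      ← Real.rpow_mul (by norm_num), ← Real.rpow_mul (by norm_num),
      ← Real.rpow_mul hπ.le]
    norm_num
    ring
  have hC : (2:ℝ) ^ ((9:ℝ)/2) = 2 ^ ((3:ℝ)/2) * 2 ^ (3:ℕ) := by
    rw [← Real.rpow_natCast 2 3, ← Real.rpow_add (by norm_num)]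
    norm_num
  have h32 : (0:ℝ) < 2 ^ ((3:ℝ)/2) := Real.rpow_pos_of_pos (by norm_num) _
  rw [hA, hB, hC]
  unfold cS
  field_simp
  ring

lemma inv_sq_rpow_threeHalves (s : ℝ) (hs : 0 < s) : ((s ^ 2)⁻¹) ^ ((3:ℝ)/2) = (s ^ 3)⁻¹ := by
  rw [Real.inv_rpow (by positivity), ← Real.rpow_natCast s 2, ← Real.rpow_mul hs.le]
  norm_num

end AUX

/-- Subsolution property of the perturbed Sommerfeld function:
`Δω ≥ 4π c_TF^{−3/2} ω^{3/2}` for `|x| > r`, where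
`ω(x) = c_S |x|⁻⁴ (1 + a (r/|x|)^ξ)⁻²`. -/
theorem stmt_15 (r a : ℝ) (hr : 0 < r) (ha : -1 < a)
    (ω : E3 → ℝ)
    (hω : ∀ x : E3, r ≤ ‖x‖ →
      ω x = cS * (‖x‖ ^ 4)⁻¹ * ((1 + a * (r / ‖x‖) ^ ξ) ^ 2)⁻¹) :
    ∀ x : E3, r < ‖x‖ →
      4 * π * cTF ^ (-(3 : ℝ) / 2) * ω x ^ ((3 : ℝ) / 2) ≤ laplacianE3 ω x := by
  intro x hx
  have hrx : (0:ℝ) < ‖x‖ := lt_trans hr hx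
  set b : ℝ := a * r ^ ξ with hb
  set q : E3 → ℝ := fun y => ∑ i, (EuclideanSpace.proj i) y * (EuclideanSpace.proj i) y with hqdef
  set U : Set E3 := {y | r < ‖y‖} with hUdef
  have hUopen : IsOpen U := isOpen_lt continuous_const continuous_norm
  have hxU : x ∈ U := hx
  have hq_eq : ∀ y : E3, q y = ‖y‖ ^ 2 := by
    intro y
    rw [hqdef, EuclideanSpace.norm_eq, Real.sq_sqrt (by positivity)]
    simp [Real.norm_eq_abs, pow_two, abs_mul_abs_self]
  have hqpos : ∀ y : E3, y ∈ U → 0 < q y := by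
    intro y hy
    rw [hq_eq y]
    have : (0:ℝ) < ‖y‖ := lt_trans hr hy
    positivity
  have hbg : ∀ y : E3, y ∈ U → b * (q y) ^ (-(ξ/2)) = a * (r / ‖y‖) ^ ξ := by
    intro y hy
    have hny : (0:ℝ) < ‖y‖ := lt_trans hr hy
    rw [hq_eq y, ← Real.rpow_natCast ‖y‖ 2, ← Real.rpow_mul hny.le,
      show ((2:ℕ):ℝ) * (-(ξ/2)) = -ξ by push_cast; ring,
      Real.rpow_neg hny.le, Real.div_rpow hr.le hny.le, hb, div_eq_mul_inv]
    ring
  have hwpos : ∀ y : E3, y ∈ U → 0 < 1 + b * (q y) ^ (-(ξ/2)) := by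
    intro y hy
    rw [hbg y hy]
    have hny : (0:ℝ) < ‖y‖ := lt_trans hr hy
    have hρpos : 0 < (r / ‖y‖) ^ ξ := Real.rpow_pos_of_pos (div_pos hr hny) _
    have hρlt : (r / ‖y‖) ^ ξ < 1 :=
      Real.rpow_lt_one (le_of_lt (div_pos hr hny)) ((div_lt_one hny).2 hy) xi_pos
    nlinarith [mul_pos (show (0:ℝ) < 1 + a by linarith) hρpos]
  have hform : ∀ y ∈ U, ω y = (Fs b (-(ξ/2)) ∘ q) y := by
    intro y hy
    have h4 : (q y) ^ 2 = ‖y‖ ^ 4 := by rw [hq_eq y]; ring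
    show ω y = Fs b (-(ξ/2)) (q y)
    rw [hω y (le_of_lt hy), ← hbg y hy]
    unfold Fs
    rw [h4, mul_inv, ← mul_assoc]
  set DqL : E3 →L[ℝ] E3 →L[ℝ] ℝ :=
    ∑ i, (EuclideanSpace.proj i).smulRight ((2:ℝ) • (EuclideanSpace.proj (𝕜 := ℝ) i)) with hDqL
  have hDqL_apply : ∀ (y v : E3), DqL y v = ∑ i, y i * (2 * v i) := by
    intro y v
    rw [hDqL]
    simp [ContinuousLinearMap.sum_apply, ContinuousLinearMap.smulRight_apply, smul_eq_mul]
  have hq_deriv : ∀ y : E3, HasFDerivAt q (DqL y) y := by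
    intro y
    have h := HasFDerivAt.fun_sum
      (fun (i : Fin 3) (_ : i ∈ Finset.univ) =>
        ((EuclideanSpace.proj (𝕜 := ℝ) i).hasFDerivAt (x := y)).mul
          ((EuclideanSpace.proj (𝕜 := ℝ) i).hasFDerivAt (x := y)))
    refine h.congr_fderiv ?_
    rw [hDqL]
    ext v
    simp [ContinuousLinearMap.sum_apply, ContinuousLinearMap.smulRight_apply, smul_eq_mul]
    exact Finset.sum_congr rfl (fun i _ => by ring)
  have hω_deriv : ∀ y ∈ U, HasFDerivAt ω (Fs1 b (-(ξ/2)) (q y) • DqL y) y := by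
    intro y hy
    have h1 : HasFDerivAt (Fs b (-(ξ/2)) ∘ q) (Fs1 b (-(ξ/2)) (q y) • DqL y) y :=
      (hasDerivAt_Fs b (-(ξ/2)) (q y) (hqpos y hy) (hwpos y hy).ne').comp_hasFDerivAt y
        (hq_deriv y)
    apply h1.congr_of_eventuallyEq
    filter_upwards [hUopen.mem_nhds hy] with z hz using hform z hz
  have hfder : fderiv ℝ ω =ᶠ[nhds x] (fun y => (Fs1 b (-(ξ/2)) ∘ q) y • DqL y) := by
    filter_upwards [hUopen.mem_nhds hxU] with y hy using (hω_deriv y hy).fderiv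
  have hc : HasFDerivAt (Fs1 b (-(ξ/2)) ∘ q) ((Fs2 b (-(ξ/2)) (q x)) • DqL x) x :=
    (hasDerivAt_Fs1 b (-(ξ/2)) (q x) (hqpos x hxU) (hwpos x hxU).ne').comp_hasFDerivAt x
      (hq_deriv x)
  have hψ := hc.smul DqL.hasFDerivAt
  have hD2 : HasFDerivAt (fderiv ℝ ω)
      ((Fs1 b (-(ξ/2)) ∘ q) x • DqL
        + ((Fs2 b (-(ξ/2)) (q x)) • DqL x).smulRight (DqL x)) x :=
    hψ.congr_of_eventuallyEq hfder
  have hA : ∀ i : Fin 3, DqL (e3 i) (e3 i) = 2 := by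
    intro i
    rw [hDqL_apply]
    simp [e3, EuclideanSpace.basisFun_apply, EuclideanSpace.single_apply]
  have hBx : ∀ i : Fin 3, DqL x (e3 i) = 2 * x i := by
    intro i
    rw [hDqL_apply]
    simp [e3, EuclideanSpace.basisFun_apply, EuclideanSpace.single_apply, mul_comm]
  have hlap : laplacianE3 ω x
      = 6 * Fs1 b (-(ξ/2)) (q x) + 4 * q x * Fs2 b (-(ξ/2)) (q x) := by
    unfold laplacianE3
    have hi : ∀ i : Fin 3, iteratedFDeriv ℝ 2 ω x ![e3 i, e3 i]
        = 2 * Fs1 b (-(ξ/2)) (q x) + 4 * Fs2 b (-(ξ/2)) (q x) * (x i ^ 2) := by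
      intro i
      rw [iteratedFDeriv_two_apply, hD2.fderiv]
      simp only [Matrix.cons_val_zero, Matrix.cons_val_one, Matrix.head_cons,
        ContinuousLinearMap.add_apply, ContinuousLinearMap.coe_smul', Pi.smul_apply,
        ContinuousLinearMap.smulRight_apply, ContinuousLinearMap.smul_apply,
        smul_eq_mul, Function.comp_apply]
      rw [hA i, hBx i]
      ring
    have hsum : ∑ i : Fin 3, (x i) ^ 2 = q x := by
      rw [hqdef]; simp [pow_two]
    rw [Finset.sum_congr rfl (fun i _ => hi i), Finset.sum_add_distrib]
    have h2 : ∑ i : Fin 3, 4 * Fs2 b (-(ξ/2)) (q x) * x i ^ 2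
        = 4 * Fs2 b (-(ξ/2)) (q x) * q x := by
      rw [← Finset.mul_sum, hsum]
    rw [h2]
    simp [Finset.sum_const]
    ring
  -- final inequality
  have ht0 : 0 < q x := hqpos x hxU
  have hW : 0 < 1 + b * (q x) ^ (-(ξ/2)) := hwpos x hxU
  have hcS : (0:ℝ) < cS := by unfold cS; positivity
  have hωx : ω x = cS * ((q x) ^ 2)⁻¹ * ((1 + b * (q x) ^ (-(ξ/2))) ^ 2)⁻¹ := by
    rw [hform x hxU]
    show Fs b (-(ξ/2)) (q x) = _
    unfold Fs
    rw [mul_inv, ← mul_assoc]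
  have hpow : ω x ^ ((3:ℝ)/2)
      = cS ^ ((3:ℝ)/2) * ((q x) ^ 3)⁻¹ * ((1 + b * (q x) ^ (-(ξ/2))) ^ 3)⁻¹ := by
    rw [hωx, Real.mul_rpow (by positivity) (by positivity),
      Real.mul_rpow (by positivity) (by positivity),
      inv_sq_rpow_threeHalves (q x) ht0, inv_sq_rpow_threeHalves _ hW]
  have hLHS : 4 * π * cTF ^ (-(3 : ℝ) / 2) * ω x ^ ((3:ℝ)/2)
      = 12 * cS * ((q x) ^ 3)⁻¹ * ((1 + b * (q x) ^ (-(ξ/2))) ^ 3)⁻¹ := by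
    calc 4 * π * cTF ^ (-(3 : ℝ) / 2) * ω x ^ ((3:ℝ)/2)
        = (4 * π * cTF ^ (-(3 : ℝ) / 2) * cS ^ ((3:ℝ)/2)) * ((q x) ^ 3)⁻¹
            * ((1 + b * (q x) ^ (-(ξ/2))) ^ 3)⁻¹ := by rw [hpow]; ring
      _ = _ := by rw [const_id]
  rw [hLHS, hlap, show 6 * Fs1 b (-(ξ/2)) (q x) + 4 * q x * Fs2 b (-(ξ/2)) (q x)
      = 12 * cS * ((q x) ^ 3)⁻¹ * ((1 + b * (q x) ^ (-(ξ/2))) ^ 3)⁻¹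
        + 6 * ξ ^ 2 * (b * (q x) ^ (-(ξ/2))) ^ 2 * cS * ((q x) ^ 3)⁻¹
            * ((1 + b * (q x) ^ (-(ξ/2))) ^ 4)⁻¹ from key_comb b (q x) ht0 hW.ne']
  have hterm : 0 ≤ 6 * ξ ^ 2 * (b * (q x) ^ (-(ξ/2))) ^ 2 * cS * ((q x) ^ 3)⁻¹
      * ((1 + b * (q x) ^ (-(ξ/2))) ^ 4)⁻¹ := by
    apply mul_nonneg
    apply mul_nonneg
    apply mul_nonneg (by positivity) hcS.le
    · exact inv_nonneg.2 (by positivity)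
    · positivity
  linarith
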